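/- Let A = {0,1}, k = 2k'+1 odd, n ≥ k+1, n0 = n−k+1, and J = {n0, n0+2, …, n−2, n}. Let φ be the map on pairs in [0,7] × A^2 defined by φ(0,11) = (1,01), φ(1,10) = (2,11), φ(2,00) = (3,10), φ(3,01) = (4,10), φ(4,01) = (5,11), φ(5,00) = (6,01), φ(6,10) = (7,00), φ(7,11) = (0,00). For every i ∈ [1, 2^n−1] and every j ∈ J with j ≠ n0: if i is not divisible by 2^{j−2} then (Q^{[j]}_{[i]}, C^{[j]}_{[i]}) = (Q^{[j]}_{[i−1]}, θ(C^{[j]}_{[i−1]})), and if i is divisible by 2^{j−2} then (Q^{[j]}_{[i]}, C^{[j]}_{[i]}) = φ(Q^{[j]}_{[i−1]}, C^{[j]}_{[i−1]}). -/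

import Mathlib

/-- Hamming distance between two words (lists) of the same length:
the number of positions in which they differ. -/
def hammingL {α : Type*} [DecidableEq α] (w w' : List α) : ℕ :=
  ((w.zip w').filter fun q => decide (q.1 ≠ q.2)).length

/-- `w` (restricted to indices `< N`) is a `σ_k`-Gray cycle over `X`:
its terms are pairwise distinct and enumerate `X` (a bijection from `[0, N-1]` onto `X`),
two consecutive terms have the same length and Hamming distance exactly `k`, and so do
the first and the last term. -/
def IsGrayCycleOn {α : Type*} [DecidableEq α] (k N : ℕ) (w : ℕ → List α)
    (X : Set (List α)) : Prop :=
  Set.BijOn w (Set.Iio N) X ∧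
  (∀ i, 1 ≤ i → i < N →
    (w (i - 1)).length = (w i).length ∧ hammingL (w (i - 1)) (w i) = k) ∧
  (0 < N → (w (N - 1)).length = (w 0).length ∧ hammingL (w (N - 1)) (w 0) = k)

/-- The bit complement `θ : 0 ↔ 1` on the binary alphabet `{0,1}`. -/
def cpl (x : Fin 2) : Fin 2 := x + 1

/-- The bit complement extended letterwise to binary words. -/
def cplW (w : List (Fin 2)) : List (Fin 2) := w.map cpl

/-- The reflected binary Gray code `g^{m,1}` over words of length `m`:
`g^{0,1} = (ε)` and `g^{m+1,1} = (0·g^{m,1}, 1·(g^{m,1})^R)`. -/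
def binGray : ℕ → List (List (Fin 2))
  | 0 => [[]]
  | m + 1 =>
      (binGray m).map (fun w => 0 :: w) ++ (binGray m).reverse.map (fun w => 1 :: w)

/-- The sequence `γ^{n0,1}`: `γ^{n0,1}_{[0]} = g^{n0,1}_{[0]}` and
`γ^{n0,1}_{[i]} = g^{n0,1}_{[2^{n0} - i]}` for `1 ≤ i ≤ 2^{n0} - 1`. -/
def gamma1 (n0 i : ℕ) : List (Fin 2) :=
  if i = 0 then (binGray n0).getD 0 [] else (binGray n0).getD (2 ^ n0 - i) []

/-- The sequence `ρ^{n0,1}`: `ρ^{n0,1}_{[0]} = g^{n0,1}_{[2^{n0}-1]}` and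
`ρ^{n0,1}_{[i]} = g^{n0,1}_{[i-1]}` for `1 ≤ i ≤ 2^{n0} - 1`. -/
def rho1 (n0 i : ℕ) : List (Fin 2) :=
  if i = 0 then (binGray n0).getD (2 ^ n0 - 1) [] else (binGray n0).getD (i - 1) []

/-- `grSeq n0 true t i` (resp. `grSeq n0 false t i`) is the term of index `i` of the
sequence `γ^{n0+2t, 2t+1}` (resp. `ρ^{n0+2t, 2t+1}`), built inductively: the base cases
are `γ^{n0,1}` and `ρ^{n0,1}`, and, writing `i = q·2^m + r` with `m = n0 + 2t` and
`r < 2^m`, `γ^{m+2, (2t+1)+2}_{[i]}` is `θ^r(00)·γ^{m,2t+1}_{[r]}`, `θ^r(01)·ρ^{m,2t+1}_{[r]}`,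
`θ^r(11)·γ^{m,2t+1}_{[r]}`, `θ^r(10)·ρ^{m,2t+1}_{[r]}` according to `q = 0, 1, 2, 3`, and
`ρ^{m+2, (2t+1)+2}_{[i]}` is `θ^r(10)·γ^{m,2t+1}_{[r]}`, `θ^r(11)·ρ^{m,2t+1}_{[r]}`,
`θ^r(01)·γ^{m,2t+1}_{[r]}`, `θ^r(00)·ρ^{m,2t+1}_{[r]}` according to `q = 0, 1, 2, 3`. -/
def grSeq (n0 : ℕ) : Bool → ℕ → ℕ → List (Fin 2)
  | b, 0, i => if b then gamma1 n0 i else rho1 n0 i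
  | b, t + 1, i =>
      cplW^[i % 2 ^ (n0 + 2 * t)]
        (if b then
          (if i / 2 ^ (n0 + 2 * t) = 0 then [0, 0]
           else if i / 2 ^ (n0 + 2 * t) = 1 then [0, 1]
           else if i / 2 ^ (n0 + 2 * t) = 2 then [1, 1] else [1, 0])
         else
          (if i / 2 ^ (n0 + 2 * t) = 0 then [1, 0]
           else if i / 2 ^ (n0 + 2 * t) = 1 then [1, 1]
           else if i / 2 ^ (n0 + 2 * t) = 2 then [0, 1] else [0, 0])) ++
        grSeq n0 (i / 2 ^ (n0 + 2 * t) % 2 == 0) t (i % 2 ^ (n0 + 2 * t))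

/-- For odd `k` and `n ≥ k + 1`, `gammaNK n k i` is the term `γ^{n,k}_{[i]}`
(here `n0 = n - k + 1` and `k = 2·(k/2) + 1`). -/
def gammaNK (n k i : ℕ) : List (Fin 2) := grSeq (n + 1 - k) true (k / 2) i

/-- For odd `k` and `n ≥ k + 1`, `rhoNK n k i` is the term `ρ^{n,k}_{[i]}`. -/
def rhoNK (n k i : ℕ) : List (Fin 2) := grSeq (n + 1 - k) false (k / 2) i


section Aux

def PP (b : Bool) (q : ℕ) : List (Fin 2) :=
  if b then
    (if q = 0 then [0, 0] else if q = 1 then [0, 1] else if q = 2 then [1, 1] else [1, 0])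
  else
    (if q = 0 then [1, 0] else if q = 1 then [1, 1] else if q = 2 then [0, 1] else [0, 0])

lemma cplW_cplW (w : List (Fin 2)) : cplW (cplW w) = w := by
  simp only [cplW, List.map_map]
  have h : cpl ∘ cpl = id := funext fun x => by fin_cases x <;> rfl
  simp [h]

lemma cplW_iter_two (q : ℕ) (w : List (Fin 2)) : cplW^[2 * q] w = w := by
  induction q with
  | zero => rfl
  | succ q ih =>
    have : 2 * (q + 1) = 2 * q + 2 := by ring
    rw [this, Function.iterate_add_apply, Function.iterate_succ_apply,
      Function.iterate_one, cplW_cplW, ih]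

lemma cplW_iter_mod (r : ℕ) (w : List (Fin 2)) : cplW^[r] w = cplW^[r % 2] w := by
  conv_lhs => rw [show r = r % 2 + 2 * (r / 2) by omega]
  rw [Function.iterate_add_apply, cplW_iter_two]

lemma cplW_iter_length (r : ℕ) (w : List (Fin 2)) : (cplW^[r] w).length = w.length := by
  induction r with
  | zero => rfl
  | succ r ih => rw [Function.iterate_succ_apply', cplW, List.length_map, ih]

lemma PP_length (b : Bool) (q : ℕ) : (PP b q).length = 2 := by
  unfold PP; split <;> split_ifs <;> rfl

lemma grSeq_succ (n0 : ℕ) (b : Bool) (t i : ℕ) :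
    grSeq n0 b (t + 1) i =
      cplW^[i % 2 ^ (n0 + 2 * t)] (PP b (i / 2 ^ (n0 + 2 * t))) ++
        grSeq n0 (i / 2 ^ (n0 + 2 * t) % 2 == 0) t (i % 2 ^ (n0 + 2 * t)) := rfl

lemma key (n0 : ℕ) (hn0 : 2 ≤ n0) : ∀ t b s i, 1 ≤ s → s ≤ t → i < 2 ^ (n0 + 2 * t) →
    ((grSeq n0 b t i).drop (n0 + 2 * t - (n0 + 2 * s))).take 2 =
      cplW^[i % 2] (PP (if s = t then b else decide (i / 2 ^ (n0 + 2 * s) % 2 = 0))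
        (i % 2 ^ (n0 + 2 * s) / 2 ^ (n0 + 2 * s - 2))) := by
  intro t
  induction t with
  | zero => intro b s i hs1 hs0 _; omega
  | succ t ih =>
    intro b s i hs1 hst hi
    set m := n0 + 2 * t with hm
    have hmod2 : i % 2 ^ m % 2 = i % 2 := by
      rw [Nat.mod_mod_of_dvd]
      exact dvd_pow_self 2 (by omega)
    have hlen : (cplW^[i % 2 ^ m] (PP b (i / 2 ^ m))).length = 2 := by
      rw [cplW_iter_length, PP_length]
    rcases eq_or_lt_of_le hst with heq | hlt
    · -- s = t + 1
      rw [grSeq_succ]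
      have hd : n0 + 2 * (t + 1) - (n0 + 2 * s) = 0 := by omega
      rw [hd, List.drop_zero, List.take_left' hlen]
      have h1 : i % 2 ^ (n0 + 2 * s) = i := by
        rw [heq]; exact Nat.mod_eq_of_lt hi
      have h2 : n0 + 2 * s - 2 = m := by omega
      rw [if_pos heq, h1, h2, cplW_iter_mod, hmod2]
    · -- s ≤ t
      have hst' : s ≤ t := by omega
      rw [grSeq_succ]
      have hd : n0 + 2 * (t + 1) - (n0 + 2 * s) = 2 + (m - (n0 + 2 * s)) := by omega
      have hdrop : ∀ w : List (Fin 2),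
          ((cplW^[i % 2 ^ m] (PP b (i / 2 ^ m))) ++ w).drop (2 + (m - (n0 + 2 * s))) =
            w.drop (m - (n0 + 2 * s)) := by
        intro w
        rw [show 2 + (m - (n0 + 2 * s)) =
            (cplW^[i % 2 ^ m] (PP b (i / 2 ^ m))).length + (m - (n0 + 2 * s)) from by
          rw [hlen], List.drop_length_add_append]
      rw [hd, hdrop]
      have hi' : i % 2 ^ m < 2 ^ m := Nat.mod_lt _ (Nat.pow_pos (by norm_num))
      rw [ih _ s _ hs1 hst' hi']
      have hjm : n0 + 2 * s ≤ m := by omega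
      have hmodj : i % 2 ^ m % 2 ^ (n0 + 2 * s) = i % 2 ^ (n0 + 2 * s) :=
        Nat.mod_mod_of_dvd _ (pow_dvd_pow 2 hjm)
      rw [hmod2, hmodj]
      rw [if_neg (show ¬ s = t + 1 by omega)]
      congr 2
      rcases eq_or_lt_of_le hst' with heq2 | hlt2
      · rw [if_pos heq2]
        have h4 : n0 + 2 * s = m := by omega
        rw [h4]
        rcases Nat.mod_two_eq_zero_or_one (i / 2 ^ m) with h | h <;> simp [h, ← hm]
      · -- s < t
        rw [if_neg (show ¬ s = t by omega)]
        have h2m : (2 : ℕ) ^ m = 2 ^ (n0 + 2 * s) * 2 ^ (m - (n0 + 2 * s)) := by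
          rw [← pow_add]; congr 1; omega
        have hq : i % 2 ^ m / 2 ^ (n0 + 2 * s) % 2 = i / 2 ^ (n0 + 2 * s) % 2 := by
          rw [h2m, Nat.mod_mul_right_div_self, Nat.mod_mod_of_dvd]
          exact dvd_pow_self 2 (by omega)
        rw [hq]

lemma factor_formula (n0 : ℕ) (hn0 : 2 ≤ n0) (t s i : ℕ) (hs1 : 1 ≤ s) (hst : s ≤ t)
    (hi : i < 2 ^ (n0 + 2 * t)) :
    ((grSeq n0 true t i).drop (n0 + 2 * t - (n0 + 2 * s))).take 2 =
      cplW^[i % 2] (PP (decide (i % 2 ^ (n0 + 2 * s + 1) / 2 ^ (n0 + 2 * s - 2) < 4))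
        (i % 2 ^ (n0 + 2 * s + 1) / 2 ^ (n0 + 2 * s - 2) % 4)) := by
  rw [key n0 hn0 t true s i hs1 hst hi]
  set j := n0 + 2 * s with hj
  have e8 : (2:ℕ) ^ (j + 1) = 2 ^ (j - 2) * 8 := by
    rw [show (8:ℕ) = 2 ^ 3 by norm_num, ← pow_add]; congr 1; omega
  have e4 : (2:ℕ) ^ j = 2 ^ (j - 2) * 4 := by
    rw [show (4:ℕ) = 2 ^ 2 by norm_num, ← pow_add]; congr 1; omega
  have hQ : i % 2 ^ (j + 1) / 2 ^ (j - 2) = i / 2 ^ (j - 2) % 8 := by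
    rw [e8, Nat.mod_mul_right_div_self]
  have hq4 : i % 2 ^ j / 2 ^ (j - 2) = i / 2 ^ (j - 2) % 4 := by
    rw [e4, Nat.mod_mul_right_div_self]
  have hdiv : i / 2 ^ j % 2 = i / 2 ^ (j - 2) / 4 % 2 := by
    rw [e4, ← Nat.div_div_eq_div_mul]
  have h84 := Nat.mod_mul_right_div_self (i / 2 ^ (j - 2)) 4 2
  norm_num at h84
  rw [hQ]
  congr 2
  · split_ifs with h
    · subst h
      have hi4 : i / 2 ^ (j - 2) < 4 := by
        apply Nat.div_lt_of_lt_mul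
        rw [← e4]; exact hi
      symm; rw [decide_eq_true_eq]
      generalize i / 2 ^ (j - 2) = X at hi4 ⊢
      omega
    · rw [hdiv]
      apply decide_eq_decide.mpr
      generalize i / 2 ^ (j - 2) = X at h84 ⊢
      omega
  · rw [hq4]
    generalize i / 2 ^ (j - 2) = X
    omega

lemma Qmod (j i : ℕ) (hj : 2 ≤ j) :
    i % 2 ^ (j + 1) / 2 ^ (j - 2) = i / 2 ^ (j - 2) % 8 := by
  rw [show (2:ℕ) ^ (j + 1) = 2 ^ (j - 2) * 8 by
      rw [show (8:ℕ) = 2 ^ 3 by norm_num, ← pow_add]; congr 1; omega,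
    Nat.mod_mul_right_div_self]

end Aux

/-- The map `φ` on pairs in `[0,7] × A²` defined by `φ(0,11) = (1,01)`,
`φ(1,10) = (2,11)`, `φ(2,00) = (3,10)`, `φ(3,01) = (4,10)`, `φ(4,01) = (5,11)`,
`φ(5,00) = (6,01)`, `φ(6,10) = (7,00)`, `φ(7,11) = (0,00)`. -/
def phiMap (x : ℕ × List (Fin 2)) : ℕ × List (Fin 2) :=
  if x = (0, [1, 1]) then (1, [0, 1])
  else if x = (1, [1, 0]) then (2, [1, 1])
  else if x = (2, [0, 0]) then (3, [1, 0])
  else if x = (3, [0, 1]) then (4, [1, 0])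
  else if x = (4, [0, 1]) then (5, [1, 1])
  else if x = (5, [0, 0]) then (6, [0, 1])
  else if x = (6, [1, 0]) then (7, [0, 0])
  else if x = (7, [1, 1]) then (0, [0, 0])
  else x

/-- Let `k` be odd, `n ≥ k + 1`, `n0 = n - k + 1`, and `J = {n0, n0+2, …, n-2, n}`.
For `j ∈ J` with `j ≠ n0`, writing `μ(i,j) = i mod 2^{j+1}`,
`Q^{[j]}_{[i]} = ⌊μ(i,j)/2^{j-2}⌋`, and `C^{[j]}_{[i]}` the two-letter factor of
`γ^{n,k}_{[i]}` in positions `j, j-1` from the right: if `2^{j-2}` does not divide `i`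
then `(Q^{[j]}_{[i]}, C^{[j]}_{[i]}) = (Q^{[j]}_{[i-1]}, θ(C^{[j]}_{[i-1]}))`, and if
`2^{j-2}` divides `i` then
`(Q^{[j]}_{[i]}, C^{[j]}_{[i]}) = φ(Q^{[j]}_{[i-1]}, C^{[j]}_{[i-1]})`. -/
theorem statement12 (n k : ℕ) (hk1 : 1 ≤ k) (hk : Odd k) (hn : k + 1 ≤ n) :
    ∀ j, n - k + 1 < j → j ≤ n → (j - (n - k + 1)) % 2 = 0 →
    ∀ i, 1 ≤ i → i < 2 ^ n →
      (¬ 2 ^ (j - 2) ∣ i →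
        (i % 2 ^ (j + 1) / 2 ^ (j - 2),
            ((gammaNK n k i).drop (n - j)).take 2) =
          ((i - 1) % 2 ^ (j + 1) / 2 ^ (j - 2),
            cplW (((gammaNK n k (i - 1)).drop (n - j)).take 2))) ∧
      (2 ^ (j - 2) ∣ i →
        (i % 2 ^ (j + 1) / 2 ^ (j - 2),
            ((gammaNK n k i).drop (n - j)).take 2) =
          phiMap ((i - 1) % 2 ^ (j + 1) / 2 ^ (j - 2),
            ((gammaNK n k (i - 1)).drop (n - j)).take 2)) := by
  intro j hj1 hj2 hjpar i hi1 hi2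
  have hk2 : k = 2 * (k / 2) + 1 := by
    rcases hk with ⟨m, hm⟩; omega
  have hn0 : 2 ≤ n + 1 - k := by omega
  have hjge : n - k + 1 + 2 ≤ j := by omega
  have hj4 : 4 ≤ j := by omega
  have hs1 : 1 ≤ (j - (n + 1 - k)) / 2 := by omega
  have hsk : (j - (n + 1 - k)) / 2 ≤ k / 2 := by omega
  have hfact : ∀ m, m < 2 ^ n → ((gammaNK n k m).drop (n - j)).take 2 =
      cplW^[m % 2] (PP (decide (m % 2 ^ (j + 1) / 2 ^ (j - 2) < 4))
        (m % 2 ^ (j + 1) / 2 ^ (j - 2) % 4)) := by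
    intro m hm
    have hneq : n = (n + 1 - k) + 2 * (k / 2) := by omega
    have hjeq : j = (n + 1 - k) + 2 * ((j - (n + 1 - k)) / 2) := by omega
    have := factor_formula (n + 1 - k) hn0 (k / 2) ((j - (n + 1 - k)) / 2) m hs1 hsk
      (by rw [← hneq]; exact hm)
    rw [← hjeq, ← hneq] at this
    exact this
  have hj2' : 2 ≤ j := by omega
  have hQi := Qmod j i hj2'
  have hQi1 := Qmod j (i - 1) hj2'
  have hsd := Nat.succ_div (a := i - 1) (b := 2 ^ (j - 2))
  rw [show i - 1 + 1 = i by omega] at hsd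
  constructor
  · -- not divisible
    intro hndvd
    rw [if_neg hndvd, add_zero] at hsd
    have hQeq : i % 2 ^ (j + 1) / 2 ^ (j - 2) = (i - 1) % 2 ^ (j + 1) / 2 ^ (j - 2) := by
      rw [hQi, hQi1, hsd]
    rw [hfact i hi2, hfact (i - 1) (by omega), hQeq]
    simp only [Prod.mk.injEq]
    refine ⟨trivial, ?_⟩
    rcases Nat.mod_two_eq_zero_or_one i with hp | hp
    · have hp1 : (i - 1) % 2 = 1 := by omega
      rw [hp, hp1]
      simp [cplW_cplW]
    · have hp1 : (i - 1) % 2 = 0 := by omega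
      rw [hp, hp1]
      simp
  · -- divisible
    intro hdvd
    rw [if_pos hdvd] at hsd
    have h2i : 2 ∣ i := dvd_trans (dvd_pow_self 2 (by omega)) hdvd
    have hpe : i % 2 = 0 := by omega
    have hpo : (i - 1) % 2 = 1 := by omega
    have hQieq : i % 2 ^ (j + 1) / 2 ^ (j - 2) = ((i - 1) / 2 ^ (j - 2) % 8 + 1) % 8 := by
      rw [hQi, hsd]
      generalize (i - 1) / 2 ^ (j - 2) = X
      omega
    rw [hfact i hi2, hfact (i - 1) (by omega), hQieq, hQi1, hpe, hpo]
    have hrlt : (i - 1) / 2 ^ (j - 2) % 8 < 8 := Nat.mod_lt _ (by norm_num)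
    generalize (i - 1) / 2 ^ (j - 2) % 8 = r at hrlt ⊢
    interval_cases r <;> decide
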